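/- Let p be a prime, k and m positive integers, γ ≥ 1 a real number, K a finite field of characteristic p, V an F_p-vector space, and Φ : K^m → V an injective F_p-linear map. Let C ⊆ K \ {0} be a set such that for every finite S ⊆ C and every b : S → F_p with Σ_{a∈S} b(a) ≠ 0 in F_p one has Σ_{a∈S} b(a)·a ≠ 0 in K. Let W be a finite set of vectors in K^m and c : W → {1,…,k} a coloring. Assume every finite subset of W of size at most γ·k is linearly independent over K. Then for every function x : W × C → F_p with Σ_{(w,a)} x(w,a)·(e_{c(w)}, Φ(a·w)) = (1_k, 0) in F_p^k × V, the support of x has size strictly greater than γ·k. -/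
import Mathlib


theorem stmt7 (p : ℕ) (hp : p.Prime) (k m : ℕ) (hk : 0 < k) (hm : 0 < m)
    (γ : ℝ) (hγ : 1 ≤ γ)
    {K : Type*} [Field K] [Fintype K] [DecidableEq K] [CharP K p] [Algebra (ZMod p) K]
    {V : Type*} [AddCommGroup V] [Module (ZMod p) V]
    (Φ : (Fin m → K) →ₗ[ZMod p] V) (hΦ : Function.Injective Φ)
    (C : Finset K) (hC0 : ∀ a ∈ C, a ≠ 0)
    (hCsum : ∀ S : Finset K, S ⊆ C → ∀ b : K → ZMod p,
      ∑ a ∈ S, b a ≠ 0 → ∑ a ∈ S, b a • a ≠ 0)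
    (W : Finset (Fin m → K)) (c : {w // w ∈ W} → Fin k)
    (hW : ∀ S : Finset (Fin m → K), S ⊆ W → (S.card : ℝ) ≤ γ * k →
      LinearIndependent K (fun v : S => (v : Fin m → K)))
    (x : {w // w ∈ W} × {a : K // a ∈ C} → ZMod p)
    (hx : ∑ e : {w // w ∈ W} × {a : K // a ∈ C},
        x e • (((Pi.single (c e.1) 1 : Fin k → ZMod p),
          Φ ((e.2 : K) • (e.1 : Fin m → K))) : (Fin k → ZMod p) × V)
        = (((fun _ => 1 : Fin k → ZMod p), 0) : (Fin k → ZMod p) × V)) :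
    γ * k < ((Finset.univ.filter fun e => x e ≠ 0).card : ℝ) := by
  haveI := Fact.mk hp
  by_contra h
  push_neg at h
  set s := Finset.univ.filter fun e => x e ≠ 0 with hs
  set T : Finset (Fin m → K) := s.image (fun e => (e.1 : Fin m → K)) with hT
  have hTW : T ⊆ W := by
    intro v hv
    simp only [hT, Finset.mem_image] at hv
    obtain ⟨e, _, rfl⟩ := hv
    exact e.1.2
  have hTcard : (T.card : ℝ) ≤ γ * k := by
    refine le_trans ?_ h
    exact_mod_cast Finset.card_image_le
  have hind := hW T hTW hTcard
  set coef : {w // w ∈ W} → K := fun w => ∑ a : {a // a ∈ C}, x (w, a) • (a : K) with hcoef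
  -- Second component: the sum in K^m is zero
  have h2 : ∑ e : {w // w ∈ W} × {a : K // a ∈ C},
      x e • ((e.2 : K) • (e.1 : Fin m → K)) = 0 := by
    apply hΦ
    rw [map_sum, map_zero]
    have h2' := congrArg Prod.snd hx
    simp only [Prod.snd_sum, Prod.smul_snd] at h2'
    simpa [map_smul] using h2'
  have h3 : ∑ w : {w // w ∈ W}, coef w • (w : Fin m → K) = 0 := by
    rw [← h2, Fintype.sum_prod_type]
    refine Finset.sum_congr rfl fun w _ => ?_
    rw [hcoef, Finset.sum_smul]
    exact Finset.sum_congr rfl fun a _ => smul_assoc _ _ _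
  -- coefficients vanish off T
  have hoff : ∀ w : {w // w ∈ W}, (w : Fin m → K) ∉ T → coef w = 0 := by
    intro w hw
    rw [hcoef]
    refine Finset.sum_eq_zero fun a _ => ?_
    have hx0 : x (w, a) = 0 := by
      by_contra hxa
      exact hw (Finset.mem_image.mpr ⟨(w, a), by simp [hs, hxa], rfl⟩)
    rw [hx0, zero_smul]
  -- all coefficients vanish
  classical
  set g : (Fin m → K) → K := fun v => if hv : v ∈ W then coef ⟨v, hv⟩ else 0 with hg
  have hgW : ∑ v ∈ W, g v • v = 0 := by
    rw [← Finset.sum_attach W (fun v => g v • v), ← h3, Finset.univ_eq_attach]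
    refine Finset.sum_congr rfl fun w _ => ?_
    rw [hg]
    simp only [dif_pos w.2]
  have hgT : ∑ v ∈ T, g v • v = 0 := by
    rw [← hgW]
    refine Finset.sum_subset hTW fun v hvW hvT => ?_
    have : g v = 0 := by
      rw [hg]; simp only [dif_pos hvW]
      exact hoff ⟨v, hvW⟩ hvT
    rw [this, zero_smul]
  have hgT0 : ∀ v ∈ T, g v = 0 := by
    have hsum : ∑ v : {v // v ∈ T}, g (v : Fin m → K) • ((v : Fin m → K)) = 0 := by
      rw [Finset.univ_eq_attach, Finset.sum_attach T (fun v => g v • v)]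
      exact hgT
    have := Fintype.linearIndependent_iff.mp hind (fun v => g (v : Fin m → K)) hsum
    intro v hv; exact this ⟨v, hv⟩
  have hcoef0 : ∀ w : {w // w ∈ W}, coef w = 0 := by
    intro w
    by_cases hw : (w : Fin m → K) ∈ T
    · have := hgT0 _ hw
      rw [hg] at this
      simpa [dif_pos w.2] using this
    · exact hoff w hw
  -- First component: find w with ∑_a x (w,a) ≠ 0
  set i : Fin k := ⟨0, hk⟩
  have h1 := congrArg (fun v : (Fin k → ZMod p) × V => v.1 i) hx
  simp only [Prod.fst_sum, Finset.sum_apply, Prod.smul_fst, Pi.smul_apply,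
    smul_eq_mul] at h1
  rw [Fintype.sum_prod_type] at h1
  have h1' : ∑ w : {w // w ∈ W},
      (if c w = i then (∑ a : {a // a ∈ C}, x (w, a)) else 0) = 1 := by
    rw [← h1]
    refine Finset.sum_congr rfl fun w _ => ?_
    by_cases hcw : c w = i
    · simp [hcw, Pi.single_apply]
    · simp [hcw, Pi.single_apply, eq_comm]
  have hne : ∃ w : {w // w ∈ W}, (∑ a : {a // a ∈ C}, x (w, a)) ≠ 0 := by
    by_contra hall
    push_neg at hall
    rw [Finset.sum_eq_zero (fun w _ => by rw [hall w]; simp)] at h1'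
    exact one_ne_zero h1'.symm
  obtain ⟨w, hwne⟩ := hne
  -- apply hCsum with S = C
  set b : K → ZMod p := fun a => if ha : a ∈ C then x (w, ⟨a, ha⟩) else 0 with hb
  have hb1 : ∑ a ∈ C, b a = ∑ a : {a // a ∈ C}, x (w, a) := by
    rw [← Finset.sum_attach C b, Finset.univ_eq_attach]
    refine Finset.sum_congr rfl fun a _ => ?_
    rw [hb]; simp [dif_pos a.2]
  have hb2 : ∑ a ∈ C, b a • a = coef w := by
    rw [← Finset.sum_attach C (fun a => b a • a), hcoef, Finset.univ_eq_attach]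
    refine Finset.sum_congr rfl fun a _ => ?_
    rw [hb]; simp [dif_pos a.2]
  have := hCsum C (subset_refl C) b (by rw [hb1]; exact hwne)
  rw [hb2, hcoef0 w] at this
  exact this rfl
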